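/- (Nonlinear superposition for the potential KdV equation.) Let α₁, α₂ ∈ ℝ and let u, u₁, u₂, w : ℝ → ℝ be differentiable functions satisfying for all x: (u₁ + u)′ = 2α₁ + ½(u₁ − u)², (u₂ + u)′ = 2α₂ + ½(u₂ − u)², (w + u₁)′ = 2α₂ + ½(w − u₁)², and (w + u₂)′ = 2α₁ + ½(w − u₂)². Then at every point x with u₁(x) ≠ u₂(x) one has w = u − 4(α₁ − α₂)/(u₁ − u₂). -/

import Mathlib

/-- Nonlinear superposition (Bianchi permutability) for the potential KdV
equation: if `u₁ = B_{α₁}(u)`, `u₂ = B_{α₂}(u)`, `w = B_{α₂}(u₁) = B_{α₁}(u₂)`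
via the spatial part of the Bäcklund transformation, then
`w = u − 4(α₁ − α₂)/(u₁ − u₂)` wherever `u₁ ≠ u₂`. -/
theorem stmt_8 (α₁ α₂ : ℝ) (u u₁ u₂ w : ℝ → ℝ)
    (hu : Differentiable ℝ u) (hu₁ : Differentiable ℝ u₁)
    (hu₂ : Differentiable ℝ u₂) (hw : Differentiable ℝ w)
    (h1 : ∀ x : ℝ, deriv (fun t => u₁ t + u t) x = 2 * α₁ + (1 / 2) * (u₁ x - u x) ^ 2)
    (h2 : ∀ x : ℝ, deriv (fun t => u₂ t + u t) x = 2 * α₂ + (1 / 2) * (u₂ x - u x) ^ 2)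
    (h3 : ∀ x : ℝ, deriv (fun t => w t + u₁ t) x = 2 * α₂ + (1 / 2) * (w x - u₁ x) ^ 2)
    (h4 : ∀ x : ℝ, deriv (fun t => w t + u₂ t) x = 2 * α₁ + (1 / 2) * (w x - u₂ x) ^ 2) :
    ∀ x : ℝ, u₁ x ≠ u₂ x → w x = u x - 4 * (α₁ - α₂) / (u₁ x - u₂ x) := by
  intro x hx
  have e1 := h1 x; have e2 := h2 x; have e3 := h3 x; have e4 := h4 x
  rw [deriv_fun_add (hu₁ x) (hu x)] at e1
  rw [deriv_fun_add (hu₂ x) (hu x)] at e2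
  rw [deriv_fun_add (hw x) (hu₁ x)] at e3
  rw [deriv_fun_add (hw x) (hu₂ x)] at e4
  have key : 4 * (α₁ - α₂) + (u₁ x - u₂ x) * (w x - u x) = 0 := by nlinarith
  have hne : u₁ x - u₂ x ≠ 0 := sub_ne_zero.mpr hx
  field_simp
  nlinarith [key]
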